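/- Let λ be a Young diagram with n boxes, and let ℓ ≤ λ₁ (the length of the first row). The number of excited diagrams of the single row [ℓ] in λ is at most C(ℓ + ⌊n/ℓ⌋, ℓ). -/

import Mathlib

open scoped Classical

/-- Number of standard Young tableaux of an arbitrary finite set of boxes
(rows and columns indexed by `ℕ`): bijective fillings with `1,…,|s|` that are
(weakly, hence strictly) increasing along rows and columns. -/
noncomputable def sytCount (s : Finset (ℕ × ℕ)) : ℕ :=
  Nat.card {f : {p // p ∈ s} ≃ Fin s.card //
    ∀ p q : {p // p ∈ s}, (p : ℕ × ℕ).1 ≤ (q : ℕ × ℕ).1 → (p : ℕ × ℕ).2 ≤ (q : ℕ × ℕ).2 →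
      (f p : ℕ) ≤ (f q : ℕ)}

/-- Hook length of a box `u` in the Young diagram `μ`. -/
noncomputable def hookLen (μ : YoungDiagram) (u : ℕ × ℕ) : ℕ :=
  (μ.cells.filter (fun v => (v.1 = u.1 ∧ u.2 ≤ v.2) ∨ (u.1 ≤ v.1 ∧ v.2 = u.2))).card

/-- One excitation step: a free box of `E` moves diagonally by `(1,1)` inside `μ`. -/
def ExcitedStep (μ : YoungDiagram) (E F : Finset (ℕ × ℕ)) : Prop :=
  ∃ u ∈ E, (u.1 + 1, u.2 + 1) ∈ μ ∧ (u.1 + 1, u.2) ∉ E ∧ (u.1, u.2 + 1) ∉ E ∧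
    (u.1 + 1, u.2 + 1) ∉ E ∧ F = insert (u.1 + 1, u.2 + 1) (E.erase u)

/-- The set of excited diagrams of `E` in `μ`. -/
noncomputable def excitedSet (μ : YoungDiagram) (E : Finset (ℕ × ℕ)) :
    Finset (Finset (ℕ × ℕ)) :=
  μ.cells.powerset.filter (fun F => Relation.ReflTransGen (ExcitedStep μ) E F)

/-- The excited sum `S(μ, E)`. -/
noncomputable def excitedSum (μ : YoungDiagram) (E : Finset (ℕ × ℕ)) : ℕ :=
  ∑ F ∈ excitedSet μ E, ∏ u ∈ F, hookLen μ u

/-- The row diagram `[ℓ]`: the first `ℓ` boxes of the first row. -/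
def rowSeg (ℓ : ℕ) : Finset (ℕ × ℕ) := (Finset.range ℓ).image (fun j => ((0 : ℕ), j))

/-- Diagonal length of a Young diagram. -/
def diagLen (μ : YoungDiagram) : ℕ :=
  ((Finset.range μ.card).filter (fun i => (i, i) ∈ μ)).card


/-- Invariant: `F` consists of boxes `(g k, k + g k)` for `k < ℓ`, with `g`
weakly increasing on `range ℓ`. -/
def RowInv (ℓ : ℕ) (F : Finset (ℕ × ℕ)) : Prop :=
  ∃ g : ℕ → ℕ, (∀ j k, j ≤ k → k < ℓ → g j ≤ g k) ∧
    F = (Finset.range ℓ).image (fun k => (g k, k + g k))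

lemma rowInv_rowSeg (ℓ : ℕ) : RowInv ℓ (rowSeg ℓ) := by
  refine ⟨fun _ => 0, fun _ _ _ _ => le_rfl, ?_⟩
  simp [rowSeg]

lemma col_strictMono {ℓ : ℕ} {g : ℕ → ℕ} (hg : ∀ j k, j ≤ k → k < ℓ → g j ≤ g k)
    {j k : ℕ} (hjk : j < k) (hk : k < ℓ) : j + g j < k + g k := by
  have := hg j k hjk.le hk
  omega

lemma rowInv_step {μ : YoungDiagram} {ℓ : ℕ} {E F : Finset (ℕ × ℕ)}
    (hs : ExcitedStep μ E F) (hE : RowInv ℓ E) : RowInv ℓ F := by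
  obtain ⟨g, hg, rfl⟩ := hE
  obtain ⟨u, hu, hmem, h1, h2, h3, rfl⟩ := hs
  simp only [Finset.mem_image, Finset.mem_range] at hu
  obtain ⟨k, hk, hu⟩ := hu
  subst hu
  -- key: if k+1 < ℓ then g k < g (k+1)
  have key : ∀ m, k < m → m < ℓ → g k < g m := by
    intro m hkm hm
    by_contra hcon
    push_neg at hcon
    have h4 : g k ≤ g m := hg k m hkm.le hm
    have h5 : g m = g k := le_antisymm hcon h4
    -- then m + g m = k + g k + (m - k); for m = k+1 this is (u.1, u.2+1) ∈ E
    rcases Nat.lt_or_ge (k+1) m with hm1 | hm1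
    · have := col_strictMono hg hm1 hm
      have := hg (k+1) m hm1.le hm
      -- g (k+1) ≤ g m = g k ≤ g (k+1), so g(k+1) = g k and k+1 covers
      have h6 : g (k+1) = g k := le_antisymm (h5 ▸ this) (hg k (k+1) (by omega) (by omega))
      apply h2
      refine Finset.mem_image.mpr ⟨k+1, Finset.mem_range.mpr (by omega), ?_⟩
      simp [h6]
      omega
    · have hm2 : m = k + 1 := by omega
      subst hm2
      apply h2
      refine Finset.mem_image.mpr ⟨k+1, Finset.mem_range.mpr (by omega), ?_⟩
      simp [h5]
      omega
  refine ⟨Function.update g k (g k + 1), ?_, ?_⟩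
  · intro j m hjm hm
    rcases eq_or_ne j k with rfl | hj <;> rcases eq_or_ne m j with rfl | hmj
    · simp
    · rcases eq_or_ne m j with rfl | _
      · simp
      · have : j < m := lt_of_le_of_ne hjm (Ne.symm hmj)
        simp [Function.update_of_ne (by omega : m ≠ j), Function.update_self]
        exact key m this hm
    · simp
    · rcases eq_or_ne m k with rfl | hmk
      · simp [Function.update_of_ne hj, Function.update_self]
        exact le_trans (hg j m hjm hm) (by omega)
      · simp [Function.update_of_ne hj, Function.update_of_ne hmk]
        exact hg j m hjm hm
  · -- set equality
    have hinj : ∀ j m, j < ℓ → m < ℓ →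
        ((g j : ℕ), j + g j) = (g m, m + g m) → j = m := by
      intro j m hj hm he
      by_contra hne
      rcases Nat.lt_or_ge j m with hlt | hge
      · have := col_strictMono hg hlt hm
        simp at he; omega
      · have hlt : m < j := by omega
        have := col_strictMono hg hlt hj
        simp at he; omega
    ext ⟨a, b⟩
    simp only [Finset.mem_insert, Finset.mem_erase, Finset.mem_image, Finset.mem_range]
    constructor
    · rintro (he | ⟨hne, m, hm, he⟩)
      · refine ⟨k, hk, ?_⟩
        simp only [Prod.mk.injEq] at he ⊢
        simp [Function.update_self]
        omega
      · have hmk : m ≠ k := by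
          rintro rfl
          exact hne he.symm
        refine ⟨m, hm, ?_⟩
        simp only [Prod.mk.injEq] at he ⊢
        simp [Function.update_of_ne hmk]
        omega
    · rintro ⟨m, hm, he⟩
      rcases eq_or_ne m k with rfl | hmk
      · left; simp [Function.update_self] at he; simp [← he]; omega
      · right
        simp only [Function.update_of_ne hmk, Prod.mk.injEq] at he
        obtain ⟨he1, he2⟩ := he
        constructor
        · intro hcon
          simp only [Prod.mk.injEq] at hcon
          obtain ⟨hc1, hc2⟩ := hcon
          exact hmk (hinj m k hm hk (by simp only [Prod.mk.injEq]; omega))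
        · exact ⟨m, hm, by simp only [Prod.mk.injEq]; omega⟩

lemma rowInv_of_mem_excitedSet {μ : YoungDiagram} {ℓ : ℕ} {F : Finset (ℕ × ℕ)}
    (hF : F ∈ excitedSet μ (rowSeg ℓ)) : RowInv ℓ F ∧ F ⊆ μ.cells := by
  rw [excitedSet, Finset.mem_filter, Finset.mem_powerset] at hF
  obtain ⟨hsub, hrel⟩ := hF
  refine ⟨?_, hsub⟩
  clear hsub
  induction hrel with
  | refl => exact rowInv_rowSeg ℓ
  | tail _ hstep ih => exact rowInv_step hstep ih

/-- Box bound: a box of a Young diagram gives a rectangle. -/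
lemma card_ge_of_mem (μ : YoungDiagram) {i j : ℕ} (hij : (i, j) ∈ μ) :
    (i + 1) * (j + 1) ≤ μ.card := by
  have hsub : Finset.range (i+1) ×ˢ Finset.range (j+1) ⊆ μ.cells := by
    intro ⟨a, b⟩ hab
    simp only [Finset.mem_product, Finset.mem_range] at hab
    exact μ.up_left_mem (by omega) (by omega) hij
  calc (i + 1) * (j + 1) = (Finset.range (i+1) ×ˢ Finset.range (j+1)).card := by
        simp [Finset.card_product]
    _ ≤ μ.cells.card := Finset.card_le_card hsub
    _ = μ.card := rfl

lemma col_bound {μ : YoungDiagram} {ℓ i c : ℕ} (hℓ : 0 < ℓ) (hic : i + ℓ ≥ c + 1)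
    (hmem : (i, c) ∈ μ) : c < ℓ + μ.card / ℓ := by
  rcases Nat.lt_or_ge c ℓ with hc | hc
  · exact hc.trans_le (Nat.le_add_right _ _)
  · have hcard := card_ge_of_mem μ hmem
    have h1 : ℓ * (c + 1 - ℓ) ≤ μ.card := by
      calc ℓ * (c + 1 - ℓ) ≤ (c + 1) * (i + 1) := by
            apply Nat.mul_le_mul (by omega) (by omega)
        _ = (i + 1) * (c + 1) := by ring
        _ ≤ μ.card := hcard
    have h2 : c + 1 - ℓ ≤ μ.card / ℓ :=
      (Nat.le_div_iff_mul_le hℓ).mpr (by rw [Nat.mul_comm]; exact h1)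
    omega
/-- The number of excited diagrams of the row `[ℓ]` in `λ` is at most
`C(ℓ + ⌊n/ℓ⌋, ℓ)`, where `n = |λ|`. -/
theorem excitedSet_row_card_le_choose (lam : YoungDiagram) (ℓ : ℕ)
    (h : ℓ ≤ lam.rowLen 0) :
    (excitedSet lam (rowSeg ℓ)).card ≤ (ℓ + lam.card / ℓ).choose ℓ := by
  classical
  have hcard : ((Finset.range (ℓ + lam.card / ℓ)).powersetCard ℓ).card
      = (ℓ + lam.card / ℓ).choose ℓ := by
    simp [Finset.card_powersetCard]
  rw [← hcard]
  apply Finset.card_le_card_of_injOn (fun F => F.image Prod.snd)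
  · intro F hF
    obtain ⟨⟨g, hg, hFeq⟩, hsub⟩ := rowInv_of_mem_excitedSet hF
    subst hFeq
    rw [Finset.mem_coe]; beta_reduce; rw [Finset.mem_powersetCard, Finset.image_image]
    have himg : ((Finset.range ℓ).image ((fun p => p.2) ∘ fun k => ((g k : ℕ), k + g k)))
        = (Finset.range ℓ).image (fun k => k + g k) := rfl
    rw [himg]
    constructor
    · intro c hc
      simp only [Finset.mem_image, Finset.mem_range] at hc
      obtain ⟨k, hk, rfl⟩ := hc
      rw [Finset.mem_range]
      have hmem : ((g k : ℕ), k + g k) ∈ lam := by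
        have := hsub (Finset.mem_image.mpr ⟨k, Finset.mem_range.mpr hk, rfl⟩)
        exact this
      exact col_bound (by omega) (by omega) hmem
    · rw [Finset.card_image_of_injOn, Finset.card_range]
      intro a ha b hb hab
      simp only [Finset.coe_range, Set.mem_Iio] at ha hb
      by_contra hne
      rcases Nat.lt_or_ge a b with hlt | hge
      · exact absurd hab (col_strictMono hg hlt hb).ne
      · exact absurd hab.symm (col_strictMono hg (by omega) ha).ne
  · intro F hF F' hF' heq
    obtain ⟨⟨g, hg, hFeq⟩, _⟩ := rowInv_of_mem_excitedSet hF
    obtain ⟨⟨g', hg', hFeq'⟩, _⟩ := rowInv_of_mem_excitedSet hF'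
    subst hFeq hFeq'
    simp only [Finset.image_image] at heq
    have heq' : (Finset.range ℓ).image (fun k => k + g k)
        = (Finset.range ℓ).image (fun k => k + g' k) := heq
    set f : Fin ℓ → ℕ := fun k => (k : ℕ) + g k with hf
    set f' : Fin ℓ → ℕ := fun k => (k : ℕ) + g' k with hf'
    have hsm : StrictMono f := fun a b hab => col_strictMono hg hab b.isLt
    have hsm' : StrictMono f' := fun a b hab => col_strictMono hg' hab b.isLt
    have hrange : Set.range f = Set.range f' := by
      ext x
      simp only [Set.mem_range]
      have := Finset.ext_iff.mp heq' x
      simp only [Finset.mem_image, Finset.mem_range] at this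
      constructor
      · rintro ⟨k, rfl⟩
        obtain ⟨m, hm, hmx⟩ := this.mp ⟨k, k.isLt, rfl⟩
        exact ⟨⟨m, hm⟩, hmx⟩
      · rintro ⟨k, rfl⟩
        obtain ⟨m, hm, hmx⟩ := this.mpr ⟨k, k.isLt, rfl⟩
        exact ⟨⟨m, hm⟩, hmx⟩
    have hff : f = f' := by
      haveI : WellFoundedLT (Fin ℓ) := inferInstance
      exact (StrictMono.range_inj (f := f) (g := f') hsm hsm').mp hrange
    apply Finset.image_congr
    intro k hk
    simp only [Finset.coe_range, Set.mem_Iio] at hk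
    have := congrFun hff ⟨k, hk⟩
    simp only [hf, hf'] at this
    have hgk : g k = g' k := by omega
    simp [hgk]
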